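/- A selfish miner's relative revenue is positively correlated with the private-chain length cap N: with γ1 = γ2 = 1/2, θ1 = θ2 = 1/3 and symmetric selfish Hashrates α1 = α2 = α, for every α with 0.21 < α < 1/3 the N=4 relative revenue exceeds the N=2 relative revenue, i.e. R_A⁴(α,α) > R_A(α,α). -/

import Mathlib

/-- N=2 selfish-mining model: Alice's valid-block rate. -/
noncomputable def R1N2 (a1 a2 g1 g2 t1 t2 : ℝ) : ℝ :=
  let h := 1 - a1 - a2
  (2*a1^2*(1+h) + (a2+h)*a1*h*g1 + a1*a2*h + 4*a1^2*a2*(1+h) + 2*a1*a2*h^2*t1)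
    / (1 + a1 + a2 + a1*h + 2*a1*a2 + a2*h + 2*a1*a2*h)

/-- N=2 selfish-mining model: Bob's valid-block rate. -/
noncomputable def R2N2 (a1 a2 g1 g2 t1 t2 : ℝ) : ℝ :=
  let h := 1 - a1 - a2
  (2*a2^2*(1+h) + (a1+h)*h*a2*g2 + a1*a2*h + 4*a2^2*a1*(1+h) + 2*a1*a2*h^2*t2)
    / (1 + a1 + a2 + a1*h + 2*a1*a2 + a2*h + 2*a1*a2*h)

/-- N=2 selfish-mining model: Henry's valid-block rate. -/
noncomputable def RhN2 (a1 a2 g1 g2 t1 t2 : ℝ) : ℝ :=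
  let h := 1 - a1 - a2
  (h + a1*h^2*(2-g1) + a2*h^2*(2-g2) + 2*a1*a2*h^2*(2-t1-t2) + a1*a2*h*(2-g1-g2))
    / (1 + a1 + a2 + a1*h + 2*a1*a2 + a2*h + 2*a1*a2*h)

/-- N=2 model: Alice's relative revenue R_A. -/
noncomputable def RA2 (a1 a2 g1 g2 t1 t2 : ℝ) : ℝ :=
  R1N2 a1 a2 g1 g2 t1 t2 /
    (R1N2 a1 a2 g1 g2 t1 t2 + R2N2 a1 a2 g1 g2 t1 t2 + RhN2 a1 a2 g1 g2 t1 t2)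

/-- N=2 model: Bob's relative revenue R_B. -/
noncomputable def RB2 (a1 a2 g1 g2 t1 t2 : ℝ) : ℝ :=
  R2N2 a1 a2 g1 g2 t1 t2 /
    (R1N2 a1 a2 g1 g2 t1 t2 + R2N2 a1 a2 g1 g2 t1 t2 + RhN2 a1 a2 g1 g2 t1 t2)

/-- N=4 selfish-mining model: Alice's (unnormalized) revenue polynomial S1. -/
noncomputable def S1N4 (a1 a2 g1 g2 t1 t2 : ℝ) : ℝ :=
  let h := 1 - a1 - a2
  let b1 := g1 / (g1 + g2)
  4*a1^4*(1+h) + 3*a1^3*h^2 + 16*a1^4*a2 + 4*a1^2*h + 40*a1^4*a2^2*(1+2*a2)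
  + a1*a2*h*(1+g1+2*t1*h) + 10*a1^2*a2*h + 20*a1^3*a2*h*(3*a2+a1) + 15*a1^3*a2*h^2
  + 4*a1^4*a2^2*h*(1+h) + 4*a1^4*a2^3*h^2*(b1+20) + 5*a1^5*a2^3*h
  + 4*a1^4*a2^3*h*(a2+21) + 3*a1^3*a2^4*h^2*b1 + a1*h^2*g1 + 12*a1^2*a2^2*h^2*b1
  + a1^2*a2^2*h^3*b1*(3*a1+2*a2) + 6*a1^3*a2^3*h^2*(10*h*b1+1)

/-- N=4 selfish-mining model: Bob's (unnormalized) revenue polynomial S2. -/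
noncomputable def S2N4 (a1 a2 g1 g2 t1 t2 : ℝ) : ℝ :=
  let h := 1 - a1 - a2
  let b2 := g2 / (g1 + g2)
  4*a2^4*(1+h) + 3*a2^3*h^2 + 16*a1*a2^4 + 4*a2^2*h + 40*a1^2*a2^4*(1+2*a1)
  + a1*a2*h*(1+g2+2*t2*h) + 10*a1*a2^2*h + 20*a1*a2^3*h*(3*a1+a2) + 15*a1*a2^3*h^2
  + 4*a1^2*a2^4*h*(1+h) + 4*a1^3*a2^4*h^2*(b2+20) + 5*a1^3*a2^5*h
  + 4*a1^3*a2^4*h*(a1+21) + 3*a1^4*a2^3*h^2*b2 + a2*h^2*g2 + 12*a1^2*a2^2*h^2*b2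
  + a1^2*a2^2*h^3*b2*(2*a1+3*a2) + 6*a1^3*a2^3*h^2*(10*h*b2+1)

/-- N=4 selfish-mining model: Henry's (unnormalized) revenue polynomial Sh. -/
noncomputable def ShN4 (a1 a2 g1 g2 t1 t2 : ℝ) : ℝ :=
  let h := 1 - a1 - a2
  let b1 := g1 / (g1 + g2)
  let b2 := g2 / (g1 + g2)
  h + a1*h^2*(2-g1) + a2*h^2*(2-g2) + 2*a1*a2*h^2*(2-t1-t2) + a1*a2*h*(2-g1-g2)
  + a1^2*a2^2*h^2*(6+4*a1*a2) + a1^2*a2^3*h^3*(2*b1+b2) + a1^3*a2^2*h^3*(b1+2*b2)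
  + a1^3*a2^3*h*(a1+a2) + a1^3*a2^4*h^2*(2*b1+b2) + a1^4*a2^3*h^2*(b1+2*b2)
  + 20*a1^3*a2^3*h^3 + 2*a1^4*a2^4*h

/-- N=4 model: Alice's relative revenue R_A⁴. -/
noncomputable def RA4 (a1 a2 g1 g2 t1 t2 : ℝ) : ℝ :=
  S1N4 a1 a2 g1 g2 t1 t2 /
    (S1N4 a1 a2 g1 g2 t1 t2 + S2N4 a1 a2 g1 g2 t1 t2 + ShN4 a1 a2 g1 g2 t1 t2)

/-- N=4 model: Bob's relative revenue R_B⁴. -/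
noncomputable def RB4 (a1 a2 g1 g2 t1 t2 : ℝ) : ℝ :=
  S2N4 a1 a2 g1 g2 t1 t2 /
    (S1N4 a1 a2 g1 g2 t1 t2 + S2N4 a1 a2 g1 g2 t1 t2 + ShN4 a1 a2 g1 g2 t1 t2)

/-- A selfish miner's relative revenue is positively correlated with the cap N:
with γ1=γ2=1/2, θ1=θ2=1/3 and symmetric Hashrates α1=α2=α, for every
0.21 < α < 1/3 the N=4 relative revenue exceeds the N=2 relative revenue. -/
theorem revenue_increases_with_N (α : ℝ) (h1 : 0.21 < α) (h2 : α < 1/3) :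
    RA4 α α (1/2) (1/2) (1/3) (1/3) > RA2 α α (1/2) (1/2) (1/3) (1/3) := by
  have hα0 : (0:ℝ) < α := by linarith
  have hα0' : (0.21:ℝ) < α := h1
  have hD : (0:ℝ) < 1 + α + α + α*(1-α-α) + 2*α*α + α*(1-α-α) + 2*α*α*(1-α-α) := by
    nlinarith [sq_nonneg α, mul_pos hα0 hα0]
  have h12 : (0:ℝ) < 1 + 2*α := by linarith
  -- closed forms
  have e2 : RA2 α α (1/2) (1/2) (1/3) (1/3)
      = (α/2 + 25/6*α^2 + 1/3*α^3 - 16/3*α^4) / (1 + 2*α) := by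
    unfold RA2 R1N2 R2N2 RhN2
    rw [← add_div, ← add_div, div_div_div_cancel_right₀]
    · refine (div_eq_div_iff ?_ (ne_of_gt h12)).mpr (by ring)
      exact ne_of_gt (by nlinarith [sq_nonneg α, sq_nonneg (1-2*α), mul_pos hα0 hα0])
    · exact ne_of_gt hD
  have hSsum : S1N4 α α (1/2) (1/2) (1/3) (1/3) + S2N4 α α (1/2) (1/2) (1/3) (1/3)
      + ShN4 α α (1/2) (1/2) (1/3) (1/3)
      = 1 + 2*α + 2*α^3 + 16*α^4 + 16*α^5 + 16*α^6 + 4*α^7 - 8*α^8 := by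
    unfold S1N4 S2N4 ShN4
    norm_num
    ring
  have hS1 : S1N4 α α (1/2) (1/2) (1/3) (1/3)
      = α/2 + 25/6*α^2 + 4/3*α^3 - 1/3*α^4 + 37/2*α^5 - 7*α^6 + 99/2*α^7
        - 113*α^8 + 76*α^9 := by
    unfold S1N4
    norm_num
    ring
  have hSpos : (0:ℝ) < 1 + 2*α + 2*α^3 + 16*α^4 + 16*α^5 + 16*α^6 + 4*α^7 - 8*α^8 := by
    nlinarith [pow_pos hα0 3, pow_pos hα0 4, pow_pos hα0 5, pow_pos hα0 6,
      pow_pos hα0 7, pow_pos hα0 8, sq_nonneg α]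
  rw [e2, gt_iff_lt]
  unfold RA4
  rw [hSsum, hS1, div_lt_div_iff₀ h12 hSpos]
  have hsq : α^2 < 1/9 := by nlinarith
  nlinarith [pow_pos hα0 3, pow_pos hα0 4, pow_pos hα0 5, pow_pos hα0 6,
    pow_pos hα0 7, pow_pos hα0 8, pow_pos hα0 9,
    mul_pos (pow_pos hα0 3) (show (0:ℝ) < 1/9 - α^2 by linarith),
    mul_pos (pow_pos hα0 5) (show (0:ℝ) < 1/9 - α^2 by linarith),
    mul_pos (pow_pos hα0 7) (show (0:ℝ) < 1/9 - α^2 by linarith),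
    hsq, sq_nonneg α]
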